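/- Under conditions (Ha) and (Hb), if A(x)/ℓ(x) → κ > 0 as x → ∞, then m(x)/A(x) → κ as x → ∞; conversely if m(x)/A(x) → κ with κ > 0, then A(x)/ℓ(x) → κ. -/

import Mathlib

open MeasureTheory Filter Set Asymptotics Topology

/-- Tail of a distribution: `1 - F(x) = P[X > x]`. -/
noncomputable def tailF (μ : Measure ℝ) (x : ℝ) : ℝ := (μ (Set.Ioi x)).toReal

/-- A function is slowly varying at infinity. -/
def SlowlyVarying (f : ℝ → ℝ) : Prop :=
  (∀ᶠ x in atTop, 0 < f x) ∧
    ∀ c : ℝ, 1 < c → Tendsto (fun x => f (c * x) / f x) atTop (𝓝 1)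

/-- Two-sided tail `H(x) = P[|X| > x] = 1 - F(x) + F(-x-0)`. -/
noncomputable def Hf (μ : Measure ℝ) (x : ℝ) : ℝ := (μ {y : ℝ | x < |y|}).toReal

/-- `K(x) = P[X > x] - P[X < -x] = 1 - F(x) - F(-x-0)`. -/
noncomputable def Kf (μ : Measure ℝ) (x : ℝ) : ℝ :=
  (μ (Set.Ioi x)).toReal - (μ (Set.Iio (-x))).toReal

/-- `A(x) = ∫₀ˣ K(t) dt`. -/
noncomputable def Af (μ : Measure ℝ) (x : ℝ) : ℝ := ∫ t in (0:ℝ)..x, Kf μ t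

/-- `ℓ(x) = ∫₀ˣ H(t) dt`. -/
noncomputable def ellH (μ : Measure ℝ) (x : ℝ) : ℝ := ∫ t in (0:ℝ)..x, Hf μ t

/-- `m(x)`, defined by `1/m(x) = ∫ₓ^∞ H(t)/A²(t) dt`. -/
noncomputable def mF (μ : Measure ℝ) (x : ℝ) : ℝ :=
  (∫ t in Set.Ioi x, Hf μ t / (Af μ t) ^ 2)⁻¹

/-- `r₊(x) = ∫ₓ^∞ (1-F(t))/A²(t) dt`. -/
noncomputable def rPlus (μ : Measure ℝ) (x : ℝ) : ℝ :=
  ∫ t in Set.Ioi x, tailF μ t / (Af μ t) ^ 2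

/-- `r₋(x) = ∫ₓ^∞ F(-t)/A²(t) dt`. -/
noncomputable def rMinus (μ : Measure ℝ) (x : ℝ) : ℝ :=
  ∫ t in Set.Ioi x, (μ (Set.Iio (-t))).toReal / (Af μ t) ^ 2

/-- Condition (Ha): `A(x)/(x H(x)) → ∞`, i.e. positive relative stability. -/
def HaCond (μ : Measure ℝ) : Prop :=
  Tendsto (fun x => Af μ x / (x * Hf μ x)) atTop atTop

/-- Condition (Hb): `∫_{x₀}^∞ H(x)/A²(x) dx < ∞` for some `x₀ > 0`
with `A` positive on `[x₀, ∞)`. -/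
def HbCond (μ : Measure ℝ) : Prop :=
  ∃ x₀ : ℝ, 0 < x₀ ∧ (∀ x ≥ x₀, 0 < Af μ x) ∧
    IntegrableOn (fun x => Hf μ x / (Af μ x) ^ 2) (Set.Ioi x₀)

/-- `X` is arithmetic: `X/h ∈ ℤ` almost surely for some `h > 0`. -/
def IsArith (μ : Measure ℝ) : Prop :=
  ∃ h : ℝ, 0 < h ∧ μ {x : ℝ | ∃ n : ℤ, x = n * h} = 1

/-- Characteristic function `φ(θ) = E[e^{iθX}]`. -/
noncomputable def charF (μ : Measure ℝ) (θ : ℝ) : ℂ :=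
  ∫ x, Complex.exp (Complex.I * θ * x) ∂μ


set_option linter.unusedSectionVars false
set_option linter.unusedVariables false

/-- A measurable function bounded on the relevant interval is interval integrable. -/
lemma intervalIntegrable_of_bddOn {f : ℝ → ℝ} (hm : Measurable f) {a b M : ℝ}
    (h : ∀ t ∈ Set.uIcc a b, |f t| ≤ M) : IntervalIntegrable f volume a b := by
  rw [intervalIntegrable_iff]
  have : IsFiniteMeasure (volume.restrict (Set.uIoc a b)) :=
    ⟨by rw [Measure.restrict_apply_univ]; exact measure_Ioc_lt_top⟩
  refine Integrable.mono' (integrable_const M) hm.aestronglyMeasurable ?_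
  filter_upwards [ae_restrict_mem measurableSet_uIoc] with t ht
  exact h t (Set.uIoc_subset_uIcc ht)

lemma smafilter {f : ℝ → ℝ} (hm : Measurable f) (l : Filter ℝ) :
    StronglyMeasurableAtFilter f l volume :=
  ⟨Set.univ, Filter.univ_mem, hm.aestronglyMeasurable⟩




section Basics
variable (μ : Measure ℝ) [IsProbabilityMeasure μ]

lemma Hf_nonneg (x : ℝ) : 0 ≤ Hf μ x := ENNReal.toReal_nonneg

lemma Hf_le_one (x : ℝ) : Hf μ x ≤ 1 := by
  have : μ {y : ℝ | x < |y|} ≤ 1 := prob_le_one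
  simpa [Hf] using ENNReal.toReal_le_of_le_ofReal one_pos.le (by simpa using this)

lemma anti_Hf : Antitone (Hf μ) := by
  intro x y hxy
  exact ENNReal.toReal_mono (measure_ne_top μ _)
    (measure_mono (fun z hz => lt_of_le_of_lt hxy hz))

lemma measurable_Hf : Measurable (Hf μ) := (anti_Hf μ).measurable

lemma anti_tail : Antitone (fun x => (μ (Set.Ioi x)).toReal) := by
  intro x y hxy
  exact ENNReal.toReal_mono (measure_ne_top μ _) (measure_mono (Ioi_subset_Ioi hxy))

lemma anti_tail' : Antitone (fun x => (μ (Set.Iio (-x))).toReal) := by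
  intro x y hxy
  exact ENNReal.toReal_mono (measure_ne_top μ _) (measure_mono (Iio_subset_Iio (by linarith)))

lemma measurable_Kf : Measurable (Kf μ) :=
  (anti_tail μ).measurable.sub (anti_tail' μ).measurable

lemma Hf_eq_add {x : ℝ} (hx : 0 ≤ x) :
    Hf μ x = (μ (Set.Ioi x)).toReal + (μ (Set.Iio (-x))).toReal := by
  have hset : {y : ℝ | x < |y|} = Set.Ioi x ∪ Set.Iio (-x) := by
    ext y
    simp only [mem_setOf_eq, mem_union, mem_Ioi, mem_Iio]
    rw [lt_abs]
    constructor
    · rintro (h | h); · exact Or.inl h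
      · exact Or.inr (by linarith)
    · rintro (h | h); · exact Or.inl h
      · exact Or.inr (by linarith)
  have hdisj : Disjoint (Set.Ioi x) (Set.Iio (-x)) := by
    rw [Set.disjoint_left]
    intro y hy hy'
    simp only [mem_Ioi, mem_Iio] at hy hy'
    linarith
  rw [Hf, hset, measure_union hdisj measurableSet_Iio,
    ENNReal.toReal_add (measure_ne_top μ _) (measure_ne_top μ _)]

lemma abs_Kf_le {x : ℝ} (hx : 0 ≤ x) : |Kf μ x| ≤ Hf μ x := by
  rw [Hf_eq_add μ hx, Kf]
  have h1 : (0:ℝ) ≤ (μ (Set.Ioi x)).toReal := ENNReal.toReal_nonneg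
  have h2 : (0:ℝ) ≤ (μ (Set.Iio (-x))).toReal := ENNReal.toReal_nonneg
  rw [abs_sub_comm, abs_sub_le_iff]; constructor <;> linarith

lemma Hf_pos (hmean : ∫⁻ x, ENNReal.ofReal |x| ∂μ = ⊤) (x : ℝ) : 0 < Hf μ x := by
  rcases eq_or_lt_of_le (Hf_nonneg μ x) with h | h
  · exfalso
    have hμ0 : μ {y : ℝ | x < |y|} = 0 := by
      have := (ENNReal.toReal_eq_zero_iff _).mp h.symm
      rcases this with h' | h'
      · exact h'
      · exact absurd h' (measure_ne_top μ _)
    have hae : ∀ᵐ y ∂μ, |y| ≤ x := by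
      rw [ae_iff]
      simpa using hμ0
    have : ∫⁻ y, ENNReal.ofReal |y| ∂μ ≤ ENNReal.ofReal x := by
      calc ∫⁻ y, ENNReal.ofReal |y| ∂μ ≤ ∫⁻ _, ENNReal.ofReal x ∂μ := by
            refine lintegral_mono_ae ?_
            filter_upwards [hae] with y hy using ENNReal.ofReal_le_ofReal hy
        _ = ENNReal.ofReal x := by simp
    rw [hmean] at this
    exact ENNReal.ofReal_ne_top (top_le_iff.mp this)
  · exact h

end Basics

section More
variable (μ : Measure ℝ) [IsProbabilityMeasure μ]

lemma intervalIntegrable_Hf (a b : ℝ) : IntervalIntegrable (Hf μ) volume a b :=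
  intervalIntegrable_of_bddOn (measurable_Hf μ) (M := 1)
    (fun t _ => abs_le.mpr ⟨by linarith [Hf_nonneg μ t], Hf_le_one μ t⟩)

lemma Kf_abs_le_one (t : ℝ) : |Kf μ t| ≤ 1 := by
  have h1 : (μ (Set.Ioi t)).toReal ≤ 1 := by
    have : μ (Set.Ioi t) ≤ 1 := prob_le_one
    simpa using ENNReal.toReal_le_of_le_ofReal one_pos.le (by simpa using this)
  have h2 : (μ (Set.Iio (-t))).toReal ≤ 1 := by
    have : μ (Set.Iio (-t)) ≤ 1 := prob_le_one
    simpa using ENNReal.toReal_le_of_le_ofReal one_pos.le (by simpa using this)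
  have h3 : (0:ℝ) ≤ (μ (Set.Ioi t)).toReal := ENNReal.toReal_nonneg
  have h4 : (0:ℝ) ≤ (μ (Set.Iio (-t))).toReal := ENNReal.toReal_nonneg
  rw [Kf, abs_sub_le_iff]; constructor <;> linarith

lemma intervalIntegrable_Kf (a b : ℝ) : IntervalIntegrable (Kf μ) volume a b :=
  intervalIntegrable_of_bddOn (measurable_Kf μ) (M := 1) (fun t _ => Kf_abs_le_one μ t)

lemma continuous_Af : Continuous (Af μ) :=
  intervalIntegral.continuous_primitive (fun a b => intervalIntegrable_Kf μ a b) 0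

lemma continuous_ellH : Continuous (ellH μ) :=
  intervalIntegral.continuous_primitive (fun a b => intervalIntegrable_Hf μ a b) 0

lemma ellH_sub (a b : ℝ) : ellH μ b - ellH μ a = ∫ t in a..b, Hf μ t := by
  have := intervalIntegral.integral_add_adjacent_intervals
    (intervalIntegrable_Hf μ 0 a) (intervalIntegrable_Hf μ a b)
  rw [ellH, ellH]; linarith [this]

lemma Af_sub (a b : ℝ) : Af μ b - Af μ a = ∫ t in a..b, Kf μ t := by
  have := intervalIntegral.integral_add_adjacent_intervals
    (intervalIntegrable_Kf μ 0 a) (intervalIntegrable_Kf μ a b)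
  rw [Af, Af]; linarith [this]

lemma ellH_mono : Monotone (ellH μ) := by
  intro a b hab
  have : 0 ≤ ∫ t in a..b, Hf μ t :=
    intervalIntegral.integral_nonneg hab (fun t _ => Hf_nonneg μ t)
  have h := ellH_sub μ a b
  linarith

lemma ellH_nonneg {x : ℝ} (hx : 0 ≤ x) : 0 ≤ ellH μ x := by
  have := ellH_mono μ hx
  simpa [ellH] using this

lemma ellH_pos (hmean : ∫⁻ x, ENNReal.ofReal |x| ∂μ = ⊤) {x : ℝ} (hx : 0 < x) :
    0 < ellH μ x := by
  have hmono : ∫ t in (0:ℝ)..x, Hf μ x ≤ ∫ t in (0:ℝ)..x, Hf μ t := by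
    apply intervalIntegral.integral_mono_on hx.le
      (intervalIntegrable_const) (intervalIntegrable_Hf μ 0 x)
    exact fun t ht => anti_Hf μ ht.2
  have : (0:ℝ) < x * Hf μ x := mul_pos hx (Hf_pos μ hmean x)
  rw [ellH]
  calc (0:ℝ) < x * Hf μ x := this
    _ = ∫ t in (0:ℝ)..x, Hf μ x := by simp [mul_comm]
    _ ≤ _ := hmono

end More
section Tendsto
variable (μ : Measure ℝ) [IsProbabilityMeasure μ]

lemma ellH_tendsto_atTop (hmean : ∫⁻ x, ENNReal.ofReal |x| ∂μ = ⊤) :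
    Tendsto (ellH μ) atTop atTop := by
  set g : ℝ → ENNReal := fun t => μ {a : ℝ | t < |a|} with hg
  have hmeas_g : Measurable g := by
    have : Antitone g := fun x y hxy =>
      measure_mono (fun z hz => lt_of_le_of_lt hxy hz)
    exact this.measurable
  have hlayer : ∫⁻ t in Set.Ioi (0:ℝ), g t = ⊤ := by
    rw [← lintegral_eq_lintegral_meas_lt μ (Eventually.of_forall fun x => abs_nonneg x)
      measurable_abs.aemeasurable]
    exact hmean
  -- ellH x = toReal of the partial lintegral
  have key : ∀ x : ℝ, 0 ≤ x → ellH μ x = (∫⁻ t in Set.Ioc 0 x, g t).toReal := by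
    intro x hx
    rw [ellH, intervalIntegral.integral_of_le hx]
    simp only [Hf]
    rw [integral_toReal]
    · exact (hmeas_g.aemeasurable).restrict
    · filter_upwards with t
      exact lt_of_le_of_lt prob_le_one (by norm_num)
  -- the partial lintegrals tend to ⊤
  have hmono : Monotone (fun n : ℕ => Set.Ioc (0:ℝ) n) := fun m n hmn =>
    Set.Ioc_subset_Ioc le_rfl (by exact_mod_cast hmn)
  have hunion : (⋃ n : ℕ, Set.Ioc (0:ℝ) n) = Set.Ioi 0 := by
    ext t
    simp only [Set.mem_iUnion, Set.mem_Ioc, Set.mem_Ioi]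
    constructor
    · rintro ⟨n, h1, _⟩; exact h1
    · intro ht
      obtain ⟨n, hn⟩ := exists_nat_ge t
      exact ⟨n, ht, hn⟩
  set ν := volume.withDensity g with hν
  have hνapp : ∀ s : Set ℝ, MeasurableSet s → ν s = ∫⁻ t in s, g t := fun s hs =>
    withDensity_apply g hs
  have htend : Tendsto (fun n : ℕ => ν (Set.Ioc (0:ℝ) n)) atTop (𝓝 (ν (Set.Ioi 0))) := by
    have := tendsto_measure_iUnion_atTop (μ := ν) hmono
    rwa [hunion] at this
  rw [hνapp _ measurableSet_Ioi, hlayer] at htend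
  -- ellH is monotone and unbounded
  apply tendsto_atTop_atTop_of_monotone (ellH_mono μ)
  intro M
  have : ∀ᶠ n : ℕ in atTop, ENNReal.ofReal M < ν (Set.Ioc (0:ℝ) n) :=
    htend.eventually (lt_mem_nhds ENNReal.ofReal_lt_top)
  obtain ⟨n, hn⟩ := this.exists
  refine ⟨n, ?_⟩
  rw [hνapp _ measurableSet_Ioc] at hn
  have hfin : ∫⁻ t in Set.Ioc (0:ℝ) n, g t ≠ ⊤ := by
    have : ∫⁻ t in Set.Ioc (0:ℝ) n, g t ≤ ∫⁻ _ in Set.Ioc (0:ℝ) n, 1 := by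
      refine lintegral_mono fun t => prob_le_one
    refine ne_top_of_le_ne_top ?_ this
    simp [Real.volume_Ioc]
  have := key n (Nat.cast_nonneg n)
  rw [this]
  have := (ENNReal.ofReal_le_iff_le_toReal hfin).mp hn.le
  linarith
end Tendsto
section Deriv
variable (μ : Measure ℝ) [IsProbabilityMeasure μ]

/-- The countable set of bad points where `Hf` or `Kf` may be discontinuous. -/
def badS (μ : Measure ℝ) : Set ℝ :=
  {t | ¬ContinuousAt (Hf μ) t} ∪
    ({t | ¬ContinuousAt (fun x => (μ (Set.Ioi x)).toReal) t} ∪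
     {t | ¬ContinuousAt (fun x => (μ (Set.Iio (-x))).toReal) t})

lemma countable_badS : (badS μ).Countable :=
  ((anti_Hf μ).countable_not_continuousAt).union
    (((anti_tail μ).countable_not_continuousAt).union
      ((anti_tail' μ).countable_not_continuousAt))

lemma contAt_Hf {t : ℝ} (ht : t ∉ badS μ) : ContinuousAt (Hf μ) t := by
  by_contra h; exact ht (Or.inl h)

lemma contAt_Kf {t : ℝ} (ht : t ∉ badS μ) : ContinuousAt (Kf μ) t := by
  simp only [badS, Set.mem_union, not_or, Set.mem_setOf_eq, not_not] at ht
  exact ht.2.1.sub ht.2.2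

lemma hasDerivAt_ellH {t : ℝ} (ht : t ∉ badS μ) : HasDerivAt (ellH μ) (Hf μ t) t :=
  intervalIntegral.integral_hasDerivAt_right (intervalIntegrable_Hf μ 0 t)
    (smafilter (measurable_Hf μ) _) (contAt_Hf μ ht)

lemma hasDerivAt_Af {t : ℝ} (ht : t ∉ badS μ) : HasDerivAt (Af μ) (Kf μ t) t :=
  intervalIntegral.integral_hasDerivAt_right (intervalIntegrable_Kf μ 0 t)
    (smafilter (measurable_Kf μ) _) (contAt_Kf μ ht)

end Deriv
noncomputable def qf (μ : Measure ℝ) (x₀ t : ℝ) : ℝ :=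
  if x₀ < t then Hf μ t / Af μ t ^ 2 else 0

noncomputable def rr (μ : Measure ℝ) (x : ℝ) : ℝ := ∫ t in Set.Ioi x, Hf μ t / Af μ t ^ 2

noncomputable def Pf (μ : Measure ℝ) (x₀ y : ℝ) : ℝ := ∫ t in x₀..y, qf μ x₀ t

noncomputable def rho (μ : Measure ℝ) (x₀ y : ℝ) : ℝ := rr μ x₀ - Pf μ x₀ y

section RhoSec
variable (μ : Measure ℝ) [IsProbabilityMeasure μ] {x₀ : ℝ} (hx₀ : 0 < x₀)
  (hA : ∀ x ≥ x₀, 0 < Af μ x)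
  (hInt : IntegrableOn (fun x => Hf μ x / Af μ x ^ 2) (Set.Ioi x₀))

lemma measurable_integrand : Measurable (fun t => Hf μ t / Af μ t ^ 2) :=
  (measurable_Hf μ).div (((continuous_Af μ).measurable).pow_const 2)

lemma measurable_qf : Measurable (qf μ x₀) :=
  Measurable.ite measurableSet_Ioi (measurable_integrand μ) measurable_const

include hA in
lemma Af_bdd_below {b : ℝ} (hb : x₀ ≤ b) : ∃ δ > 0, ∀ t ∈ Set.Icc x₀ b, δ ≤ Af μ t := by
  obtain ⟨t₀, ht₀mem, ht₀⟩ := (isCompact_Icc (a := x₀) (b := b)).exists_isMinOn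
    (Set.nonempty_Icc.mpr hb) ((continuous_Af μ).continuousOn)
  exact ⟨Af μ t₀, hA t₀ ht₀mem.1, fun t ht => ht₀ ht⟩

include hA in
lemma intervalIntegrable_qf (a b : ℝ) : IntervalIntegrable (qf μ x₀) volume a b := by
  obtain ⟨δ, hδ, hbd⟩ := Af_bdd_below μ hA (le_max_right (max a b) x₀)
  refine intervalIntegrable_of_bddOn (measurable_qf μ) (M := 1 / δ ^ 2) ?_
  intro t ht
  by_cases h : x₀ < t
  · have htb : t ≤ max (max a b) x₀ := ht.2.trans (le_max_left _ _)
    have hAt : δ ≤ Af μ t := hbd t ⟨h.le, htb⟩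
    have hA2 : δ ^ 2 ≤ Af μ t ^ 2 := by nlinarith
    have h0 : (0:ℝ) < δ ^ 2 := by positivity
    rw [qf, if_pos h, abs_of_nonneg (div_nonneg (Hf_nonneg μ t) (sq_nonneg _))]
    exact div_le_div₀ (by norm_num) (Hf_le_one μ t) h0 hA2
  · rw [qf, if_neg h, abs_zero]; positivity

include hA in
lemma continuous_Pf : Continuous (Pf μ x₀) :=
  intervalIntegral.continuous_primitive (fun a b => intervalIntegrable_qf μ hA a b) x₀

include hInt in
lemma integrableOn_tail {x : ℝ} (hx : x₀ ≤ x) :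
    IntegrableOn (fun t => Hf μ t / Af μ t ^ 2) (Set.Ioi x) :=
  hInt.mono_set (Set.Ioi_subset_Ioi hx)

include hInt in
lemma rho_eq_rr {y : ℝ} (hy : x₀ ≤ y) : rho μ x₀ y = rr μ y := by
  have hsplit : rr μ x₀ = (∫ t in Set.Ioc x₀ y, Hf μ t / Af μ t ^ 2) + rr μ y := by
    rw [rr, rr, ← Set.Ioc_union_Ioi_eq_Ioi hy,
      setIntegral_union (Set.Ioc_disjoint_Ioi le_rfl) measurableSet_Ioi
        (hInt.mono_set Set.Ioc_subset_Ioi_self) (integrableOn_tail μ hInt hy)]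
  have hP : Pf μ x₀ y = ∫ t in Set.Ioc x₀ y, Hf μ t / Af μ t ^ 2 := by
    rw [Pf, intervalIntegral.integral_of_le hy]
    apply setIntegral_congr_fun measurableSet_Ioc
    intro t ht
    rw [qf, if_pos ht.1]
  rw [rho, hP]; linarith

include hInt in
lemma rr_pos (hmean : ∫⁻ x, ENNReal.ofReal |x| ∂μ = ⊤) (hA' : ∀ x ≥ x₀, 0 < Af μ x)
    {x : ℝ} (hx : x₀ ≤ x) : 0 < rr μ x := by
  rw [rr, setIntegral_pos_iff_support_of_nonneg_ae]
  · have hsupp : Set.Ioi x ⊆ Function.support (fun t => Hf μ t / Af μ t ^ 2) := by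
      intro t ht
      have h1 : 0 < Hf μ t := Hf_pos μ hmean t
      have h2 : 0 < Af μ t := hA' t (le_trans hx (le_of_lt ht))
      simp only [Function.mem_support]
      positivity
    have : volume (Function.support (fun t => Hf μ t / Af μ t ^ 2) ∩ Set.Ioi x)
        = volume (Set.Ioi x) := by
      rw [Set.inter_eq_right.mpr hsupp]
    rw [this]
    simp [Real.volume_Ioi]
  · filter_upwards [ae_restrict_mem measurableSet_Ioi] with t ht
    have h2 : 0 < Af μ t := hA' t (le_trans hx (le_of_lt ht))
    have := Hf_nonneg μ t
    positivity
  · exact integrableOn_tail μ hInt hx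

include hA in
lemma hasDerivAt_rho {t : ℝ} (htx : x₀ < t) (ht : t ∉ badS μ) :
    HasDerivAt (rho μ x₀) (-(Hf μ t / Af μ t ^ 2)) t := by
  have hcongr : qf μ x₀ =ᶠ[𝓝 t] fun s => Hf μ s / Af μ s ^ 2 := by
    filter_upwards [Ioi_mem_nhds htx] with s hs
    rw [qf, if_pos (Set.mem_Ioi.mp hs)]
  have hAt : Af μ t ^ 2 ≠ 0 := by
    have := hA t htx.le; positivity
  have hcont : ContinuousAt (fun s => Hf μ s / Af μ s ^ 2) t :=
    (contAt_Hf μ ht).div (((continuous_Af μ).continuousAt).pow 2) hAt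
  have hcontq : ContinuousAt (qf μ x₀) t := hcont.congr hcongr.symm
  have hP : HasDerivAt (Pf μ x₀) (qf μ x₀ t) t :=
    intervalIntegral.integral_hasDerivAt_right (intervalIntegrable_qf μ hA x₀ t)
      (smafilter (measurable_qf μ) _) hcontq
  have : HasDerivAt (rho μ x₀) (-(qf μ x₀ t)) t := hP.const_sub (rr μ x₀)
  rwa [qf, if_pos htx] at this

include hA in
lemma continuous_rho : Continuous (rho μ x₀) :=
  continuous_const.sub (continuous_Pf μ hA)

end RhoSec
section EllTail
variable (μ : Measure ℝ) [IsProbabilityMeasure μ]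

lemma ftc_inv_ell (hmean : ∫⁻ x, ENNReal.ofReal |x| ∂μ = ⊤) {x y : ℝ} (hx : 0 < x)
    (hxy : x ≤ y) :
    ∫ t in x..y, Hf μ t / ellH μ t ^ 2 = (ellH μ x)⁻¹ - (ellH μ y)⁻¹ := by
  have hℓx : 0 < ellH μ x := ellH_pos μ hmean hx
  have hpos : ∀ t ∈ Set.Icc x y, 0 < ellH μ t := fun t ht =>
    lt_of_lt_of_le hℓx (ellH_mono μ ht.1)
  have key : ∫ t in x..y, Hf μ t / ellH μ t ^ 2 = (-(ellH μ y)⁻¹) - (-(ellH μ x)⁻¹) := by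
    apply integral_eq_of_hasDerivAt_off_countable_of_le
      (fun t => -(ellH μ t)⁻¹) _ hxy (countable_badS μ)
    · apply ContinuousOn.neg
      exact ContinuousOn.inv₀ (continuous_ellH μ).continuousOn
        (fun t ht => (hpos t ht).ne')
    · rintro t ⟨ht, htS⟩
      have hd : HasDerivAt (ellH μ) (Hf μ t) t := hasDerivAt_ellH μ htS
      have hne : ellH μ t ≠ 0 := (hpos t ⟨ht.1.le, ht.2.le⟩).ne'
      have := (hd.inv hne).neg
      convert this using 1
      · rfl
      · ring
    · apply intervalIntegrable_of_bddOn
        ((measurable_Hf μ).div (((continuous_ellH μ).measurable).pow_const 2))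
        (M := (ellH μ x ^ 2)⁻¹)
      intro t ht
      rw [Set.uIcc_of_le hxy] at ht
      have h1 : ellH μ x ≤ ellH μ t := ellH_mono μ ht.1
      have h2 : ellH μ x ^ 2 ≤ ellH μ t ^ 2 := by nlinarith
      change |Hf μ t / ellH μ t ^ 2| ≤ _
      rw [abs_of_nonneg (div_nonneg (Hf_nonneg μ t) (sq_nonneg _))]
      rw [div_eq_mul_inv]
      calc Hf μ t * (ellH μ t ^ 2)⁻¹ ≤ 1 * (ellH μ x ^ 2)⁻¹ := by
            apply mul_le_mul (Hf_le_one μ t) ?_ (by positivity) (by norm_num)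
            exact inv_anti₀ (by positivity) h2
        _ = (ellH μ x ^ 2)⁻¹ := one_mul _
  rw [key]; ring

lemma ell_tail (hmean : ∫⁻ x, ENNReal.ofReal |x| ∂μ = ⊤) {x : ℝ} (hx : 0 < x) :
    IntegrableOn (fun t => Hf μ t / ellH μ t ^ 2) (Set.Ioi x) ∧
      ∫ t in Set.Ioi x, Hf μ t / ellH μ t ^ 2 = (ellH μ x)⁻¹ := by
  have hℓx : 0 < ellH μ x := ellH_pos μ hmean hx
  set f : ℝ → ℝ := fun t => Hf μ t / ellH μ t ^ 2 with hf
  have hfnn : ∀ t, 0 ≤ f t := fun t => div_nonneg (Hf_nonneg μ t) (sq_nonneg _)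
  have hfi : ∀ i : ℝ, IntegrableOn f (Set.Ioc x (max x i)) := by
    intro i
    rw [← intervalIntegrable_iff_integrableOn_Ioc_of_le (le_max_left x i)]
    apply intervalIntegrable_of_bddOn
      ((measurable_Hf μ).div (((continuous_ellH μ).measurable).pow_const 2))
      (M := (ellH μ x ^ 2)⁻¹)
    intro t ht
    rw [Set.uIcc_of_le (le_max_left x i)] at ht
    have h1 : ellH μ x ≤ ellH μ t := ellH_mono μ ht.1
    have h2 : ellH μ x ^ 2 ≤ ellH μ t ^ 2 := by nlinarith
    change |f t| ≤ _
    rw [abs_of_nonneg (hfnn t), hf]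
    simp only []
    rw [div_eq_mul_inv]
    calc Hf μ t * (ellH μ t ^ 2)⁻¹ ≤ 1 * (ellH μ x ^ 2)⁻¹ :=
          mul_le_mul (Hf_le_one μ t) (inv_anti₀ (by positivity) h2)
            (by positivity) (by norm_num)
      _ = (ellH μ x ^ 2)⁻¹ := one_mul _
  have hInt : IntegrableOn f (Set.Ioi x) := by
    apply integrableOn_Ioi_of_intervalIntegral_norm_bounded ((ellH μ x)⁻¹) x hfi
      (tendsto_atTop_mono (fun i => le_max_right x i) tendsto_id)
    filter_upwards with i
    have hxy : x ≤ max x i := le_max_left x i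
    have : ∫ t in x..(max x i), ‖f t‖ = ∫ t in x..(max x i), f t := by
      apply intervalIntegral.integral_congr
      intro t _
      exact abs_of_nonneg (hfnn t)
    rw [this, ftc_inv_ell μ hmean hx hxy]
    have : 0 < ellH μ (max x i) := ellH_pos μ hmean (lt_of_lt_of_le hx hxy)
    have h3 : 0 < (ellH μ (max x i))⁻¹ := by positivity
    linarith
  refine ⟨hInt, ?_⟩
  have t1 : Tendsto (fun y => ∫ t in x..y, f t) atTop (𝓝 (∫ t in Set.Ioi x, f t)) :=
    intervalIntegral_tendsto_integral_Ioi x hInt tendsto_id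
  have t2 : Tendsto (fun y => ∫ t in x..y, f t) atTop (𝓝 ((ellH μ x)⁻¹)) := by
    have hℓtop : Tendsto (fun y => (ellH μ y)⁻¹) atTop (𝓝 0) :=
      (tendsto_inv_atTop_zero).comp (ellH_tendsto_atTop μ hmean)
    have : Tendsto (fun y => (ellH μ x)⁻¹ - (ellH μ y)⁻¹) atTop (𝓝 ((ellH μ x)⁻¹ - 0)) :=
      tendsto_const_nhds.sub hℓtop
    rw [sub_zero] at this
    apply this.congr'
    filter_upwards [eventually_ge_atTop x] with y hy
    rw [ftc_inv_ell μ hmean hx hy]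
  exact tendsto_nhds_unique t1 t2

end EllTail
section TailRatio

lemma tendsto_tail_ratio {f g : ℝ → ℝ} {c X0 : ℝ}
    (hfi : ∀ x ≥ X0, IntegrableOn f (Set.Ioi x))
    (hgi : ∀ x ≥ X0, IntegrableOn g (Set.Ioi x))
    (hg0 : ∀ t, X0 ≤ t → 0 ≤ g t)
    (hgpos : ∀ x ≥ X0, 0 < ∫ t in Set.Ioi x, g t)
    (hratio : ∀ ε > (0:ℝ), ∀ᶠ t in atTop, |f t - c * g t| ≤ ε * g t) :
    Tendsto (fun x => (∫ t in Set.Ioi x, f t) / (∫ t in Set.Ioi x, g t)) atTop (𝓝 c) := by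
  rw [Metric.tendsto_atTop]
  intro ε hε
  obtain ⟨N, hN⟩ := (hratio (ε/2) (by linarith)).exists_forall_of_atTop
  refine ⟨max N X0, fun x hx => ?_⟩
  have hxN : N ≤ x := le_trans (le_max_left _ _) hx
  have hxX : X0 ≤ x := le_trans (le_max_right _ _) hx
  have hfix := hfi x hxX
  have hgix := hgi x hxX
  have hIg : 0 < ∫ t in Set.Ioi x, g t := hgpos x hxX
  have hsub : IntegrableOn (fun t => f t - c * g t) (Set.Ioi x) :=
    hfix.sub (hgix.const_mul c)
  have h1 : ∫ t in Set.Ioi x, (f t - c * g t) =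
      (∫ t in Set.Ioi x, f t) - c * ∫ t in Set.Ioi x, g t := by
    rw [integral_sub hfix (hgix.const_mul c), MeasureTheory.integral_const_mul]
  have h2 : |∫ t in Set.Ioi x, (f t - c * g t)| ≤ (ε/2) * ∫ t in Set.Ioi x, g t := by
    calc |∫ t in Set.Ioi x, (f t - c * g t)| ≤ ∫ t in Set.Ioi x, |f t - c * g t| :=
          (by simpa using norm_integral_le_integral_norm (μ := volume.restrict (Set.Ioi x)) (fun t => f t - c * g t))
      _ ≤ ∫ t in Set.Ioi x, (ε/2) * g t := by
          apply setIntegral_mono_on hsub.abs (hgix.const_mul (ε/2)) measurableSet_Ioi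
          intro t ht
          exact hN t (le_trans hxN (le_of_lt ht))
      _ = (ε/2) * ∫ t in Set.Ioi x, g t := MeasureTheory.integral_const_mul _ _
  have heq : (∫ t in Set.Ioi x, f t) / (∫ t in Set.Ioi x, g t) - c =
      ((∫ t in Set.Ioi x, f t) - c * ∫ t in Set.Ioi x, g t) / (∫ t in Set.Ioi x, g t) := by
    field_simp
  rw [Real.dist_eq, heq, ← h1, abs_div, abs_of_pos hIg]
  calc |∫ t in Set.Ioi x, (f t - c * g t)| / (∫ t in Set.Ioi x, g t)
      ≤ ((ε/2) * ∫ t in Set.Ioi x, g t) / (∫ t in Set.Ioi x, g t) := by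
        exact div_le_div_of_nonneg_right h2 hIg.le |>.trans_eq rfl
    _ = ε/2 := by field_simp
    _ < ε := by linarith

end TailRatio
section Dir1
variable (μ : Measure ℝ) [IsProbabilityMeasure μ]

lemma dir1 (hmean : ∫⁻ x, ENNReal.ofReal |x| ∂μ = ⊤) {x₀ : ℝ} (hx₀ : 0 < x₀)
    (hA : ∀ x ≥ x₀, 0 < Af μ x)
    (hInt : IntegrableOn (fun x => Hf μ x / Af μ x ^ 2) (Set.Ioi x₀))
    {κ : ℝ} (hκ : 0 < κ)
    (h : Tendsto (fun x => Af μ x / ellH μ x) atTop (𝓝 κ)) :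
    Tendsto (fun x => (rr μ x)⁻¹ / Af μ x) atTop (𝓝 κ) := by
  have hℓpos : ∀ x > (0:ℝ), 0 < ellH μ x := fun x hx => ellH_pos μ hmean hx
  -- ratio of tails tends to κ⁻²
  have hsq : Tendsto (fun t => (ellH μ t / Af μ t) ^ 2) atTop (𝓝 ((κ ^ 2)⁻¹)) := by
    have h1 : Tendsto (fun t => ellH μ t / Af μ t) atTop (𝓝 κ⁻¹) := by
      have := h.inv₀ hκ.ne'
      apply this.congr'
      filter_upwards with t
      rw [inv_div]
    have := h1.pow 2
    convert this using 2
    rw [inv_pow]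
  have hratio : ∀ ε > (0:ℝ), ∀ᶠ t in atTop,
      |Hf μ t / Af μ t ^ 2 - (κ ^ 2)⁻¹ * (Hf μ t / ellH μ t ^ 2)| ≤
        ε * (Hf μ t / ellH μ t ^ 2) := by
    intro ε hε
    have hev := hsq.eventually (Metric.ball_mem_nhds _ hε)
    filter_upwards [hev, eventually_ge_atTop (max x₀ 1)] with t ht1 ht2
    have htx₀ : x₀ ≤ t := le_trans (le_max_left _ _) ht2
    have ht0 : (0:ℝ) < t := lt_of_lt_of_le one_pos (le_trans (le_max_right _ _) ht2)
    have hAt : 0 < Af μ t := hA t htx₀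
    have hℓt : 0 < ellH μ t := hℓpos t ht0
    have hfg : Hf μ t / Af μ t ^ 2 =
        (Hf μ t / ellH μ t ^ 2) * (ellH μ t / Af μ t) ^ 2 := by
      field_simp
    rw [hfg]
    have hg0 : 0 ≤ Hf μ t / ellH μ t ^ 2 := div_nonneg (Hf_nonneg μ t) (sq_nonneg _)
    rw [Real.dist_eq] at ht1
    calc |(Hf μ t / ellH μ t ^ 2) * (ellH μ t / Af μ t) ^ 2 -
          (κ ^ 2)⁻¹ * (Hf μ t / ellH μ t ^ 2)|
        = |(ellH μ t / Af μ t) ^ 2 - (κ ^ 2)⁻¹| * (Hf μ t / ellH μ t ^ 2) := by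
          rw [show (Hf μ t / ellH μ t ^ 2) * (ellH μ t / Af μ t) ^ 2 -
              (κ ^ 2)⁻¹ * (Hf μ t / ellH μ t ^ 2) =
              ((ellH μ t / Af μ t) ^ 2 - (κ ^ 2)⁻¹) * (Hf μ t / ellH μ t ^ 2) by ring,
            abs_mul, abs_of_nonneg hg0]
      _ ≤ ε * (Hf μ t / ellH μ t ^ 2) := by
          apply mul_le_mul_of_nonneg_right (le_of_lt ht1) hg0
  have htails : Tendsto (fun x => (∫ t in Set.Ioi x, Hf μ t / Af μ t ^ 2) /
      (∫ t in Set.Ioi x, Hf μ t / ellH μ t ^ 2)) atTop (𝓝 ((κ ^ 2)⁻¹)) := by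
    apply tendsto_tail_ratio (X0 := x₀)
    · exact fun x hx => integrableOn_tail μ hInt hx
    · exact fun x hx => (ell_tail μ hmean (lt_of_lt_of_le hx₀ hx)).1
    · exact fun t ht => div_nonneg (Hf_nonneg μ t) (sq_nonneg _)
    · intro x hx
      rw [(ell_tail μ hmean (lt_of_lt_of_le hx₀ hx)).2]
      have := hℓpos x (lt_of_lt_of_le hx₀ hx)
      positivity
    · exact hratio
  have hrl : Tendsto (fun x => rr μ x * ellH μ x) atTop (𝓝 ((κ ^ 2)⁻¹)) := by
    apply htails.congr'
    filter_upwards [eventually_ge_atTop x₀] with x hx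
    rw [(ell_tail μ hmean (lt_of_lt_of_le hx₀ hx)).2, rr, div_eq_mul_inv, inv_inv]
  -- assemble
  have hT : Tendsto (fun x => (rr μ x * ellH μ x) * (Af μ x / ellH μ x)) atTop
      (𝓝 (κ⁻¹)) := by
    have := hrl.mul h
    have heq : (κ ^ 2)⁻¹ * κ = κ⁻¹ := by
      field_simp
    rwa [heq] at this
  have hfinal : Tendsto (fun x => ((rr μ x * ellH μ x) * (Af μ x / ellH μ x))⁻¹) atTop
      (𝓝 κ) := by
    have := hT.inv₀ (inv_ne_zero hκ.ne')
    rwa [inv_inv] at this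
  apply hfinal.congr'
  filter_upwards [eventually_ge_atTop (max x₀ 1)] with x hx
  have hxx₀ : x₀ ≤ x := le_trans (le_max_left _ _) hx
  have hx0 : (0:ℝ) < x := lt_of_lt_of_le one_pos (le_trans (le_max_right _ _) hx)
  have hAx : 0 < Af μ x := hA x hxx₀
  have hℓx : 0 < ellH μ x := hℓpos x hx0
  have hrrx : 0 < rr μ x := rr_pos μ hInt hmean hA hxx₀
  field_simp

end Dir1
section Dir2
variable (μ : Measure ℝ) [IsProbabilityMeasure μ]

lemma intInt_contK {g : ℝ → ℝ} (hg : Continuous g) (a b : ℝ) :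
    IntervalIntegrable (fun t => g t * Kf μ t) volume a b := by
  obtain ⟨C, hC⟩ := (isCompact_uIcc (a := a) (b := b)).exists_bound_of_continuousOn
    hg.continuousOn
  apply intervalIntegrable_of_bddOn (hg.measurable.mul (measurable_Kf μ)) (M := |C| * 1)
  intro t ht
  change |g t * Kf μ t| ≤ _
  rw [abs_mul]
  apply mul_le_mul _ (Kf_abs_le_one μ t) (abs_nonneg _) (abs_nonneg _)
  have h := hC t ht
  rw [Real.norm_eq_abs] at h
  exact h.trans (le_abs_self C)

lemma intInt_ArhoK {x₀ : ℝ} (hA : ∀ x ≥ x₀, 0 < Af μ x) (a b : ℝ) :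
    IntervalIntegrable (fun t => Af μ t * rho μ x₀ t * Kf μ t) volume a b :=
  intInt_contK μ ((continuous_Af μ).mul (continuous_rho μ hA)) a b

lemma ftc_F {x₀ : ℝ} (hx₀ : 0 < x₀) (hA : ∀ x ≥ x₀, 0 < Af μ x)
    {x : ℝ} (hx : x₀ + 1 ≤ x) :
    Af μ x ^ 2 * rho μ x₀ x - Af μ (x₀+1) ^ 2 * rho μ x₀ (x₀+1) =
      ∫ t in (x₀+1)..x, (2 * (Af μ t * rho μ x₀ t * Kf μ t) - Hf μ t) := by
  have key := integral_eq_of_hasDerivAt_off_countable_of_le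
    (fun y => Af μ y ^ 2 * rho μ x₀ y)
    (fun t => 2 * (Af μ t * rho μ x₀ t * Kf μ t) - Hf μ t)
    hx (countable_badS μ) ?_ ?_ ?_
  · rw [key]
  · exact (((continuous_Af μ).pow 2).mul (continuous_rho μ hA)).continuousOn
  · rintro t ⟨ht, htS⟩
    have htx₀ : x₀ < t := lt_of_le_of_lt (by linarith) ht.1
    have hAt : 0 < Af μ t := hA t htx₀.le
    have hdA : HasDerivAt (Af μ) (Kf μ t) t := hasDerivAt_Af μ htS
    have hdrho : HasDerivAt (rho μ x₀) (-(Hf μ t / Af μ t ^ 2)) t :=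
      hasDerivAt_rho μ hA htx₀ htS
    have hprod := (hdA.pow 2).mul hdrho
    refine hprod.congr_deriv ?_
    have h1 : Af μ t ^ 2 * (Hf μ t / Af μ t ^ 2) = Hf μ t := by
      field_simp
    norm_num only [Pi.pow_apply]
    linear_combination -h1
  · exact IntervalIntegrable.sub ((intInt_ArhoK μ hA _ _).const_mul 2)
      (intervalIntegrable_Hf μ _ _)

lemma master_estimate (hmean : ∫⁻ x, ENNReal.ofReal |x| ∂μ = ⊤)
    {x₀ : ℝ} (hx₀ : 0 < x₀) (hA : ∀ x ≥ x₀, 0 < Af μ x)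
    {κ : ℝ} (hκ : 0 < κ)
    (hφ : Tendsto (fun x => Af μ x * rho μ x₀ x) atTop (𝓝 κ⁻¹))
    {ε : ℝ} (hε : 0 < ε) :
    ∃ C : ℝ, ∀ᶠ x in atTop,
      |ellH μ x - κ⁻¹ * Af μ x| ≤ 2*ε*ellH μ x + ε*Af μ x + C := by
  set x₁ : ℝ := x₀ + 1 with hx₁def
  have hx₁pos : 0 < x₁ := by simp only [hx₁def]; linarith
  obtain ⟨x₂', hx₂'⟩ := (hφ.eventually (Metric.ball_mem_nhds _ hε)).exists_forall_of_atTop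
  set x₂ : ℝ := max x₂' x₁ with hx₂def
  have hx₂x₁ : x₁ ≤ x₂ := le_max_right _ _
  have hx₂pos : 0 < x₂ := lt_of_lt_of_le hx₁pos hx₂x₁
  have hφbd : ∀ t, x₂ ≤ t → |Af μ t * rho μ x₀ t - κ⁻¹| ≤ ε := by
    intro t ht
    have := hx₂' t (le_trans (le_max_left _ _) ht)
    rw [Real.dist_eq] at this
    exact this.le
  set C₁ : ℝ := ellH μ x₁ + 2 * (∫ t in x₁..x₂, Af μ t * rho μ x₀ t * Kf μ t)
    - 2 * κ⁻¹ * Af μ x₂ + Af μ x₁ ^ 2 * rho μ x₀ x₁ with hC₁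
  refine ⟨|C₁|, ?_⟩
  filter_upwards [eventually_ge_atTop x₂] with x hx
  have hxx₁ : x₁ ≤ x := le_trans hx₂x₁ hx
  have hxx₀ : x₀ ≤ x := by simp only [hx₁def] at hxx₁; linarith
  have hAx : 0 < Af μ x := hA x hxx₀
  have hid := ftc_F μ hx₀ hA (show x₀ + 1 ≤ x from hxx₁)
  have e3 : ∫ t in x₁..x, (2 * (Af μ t * rho μ x₀ t * Kf μ t) - Hf μ t) =
      2 * (∫ t in x₁..x, Af μ t * rho μ x₀ t * Kf μ t) - (ellH μ x - ellH μ x₁) := by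
    rw [intervalIntegral.integral_sub ((intInt_ArhoK μ hA _ _).const_mul 2)
      (intervalIntegrable_Hf μ _ _), intervalIntegral.integral_const_mul,
      ellH_sub μ x₁ x]
  have e4 : ∫ t in x₁..x, Af μ t * rho μ x₀ t * Kf μ t =
      (∫ t in x₁..x₂, Af μ t * rho μ x₀ t * Kf μ t) +
        ∫ t in x₂..x, Af μ t * rho μ x₀ t * Kf μ t :=
    (intervalIntegral.integral_add_adjacent_intervals (intInt_ArhoK μ hA _ _)
      (intInt_ArhoK μ hA _ _)).symm
  have e5 : ∫ t in x₂..x, Af μ t * rho μ x₀ t * Kf μ t =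
      (∫ t in x₂..x, (Af μ t * rho μ x₀ t - κ⁻¹) * Kf μ t) +
        κ⁻¹ * (Af μ x - Af μ x₂) := by
    have hptw : ∀ t ∈ Set.uIcc x₂ x, (fun t => Af μ t * rho μ x₀ t * Kf μ t) t =
        (fun t => (Af μ t * rho μ x₀ t - κ⁻¹) * Kf μ t + κ⁻¹ * Kf μ t) t := by
      intro t _; simp only []; ring
    rw [intervalIntegral.integral_congr hptw,
      intervalIntegral.integral_add
        (intInt_contK μ (g := fun t => Af μ t * rho μ x₀ t - κ⁻¹)
          (((continuous_Af μ).mul (continuous_rho μ hA)).sub continuous_const) _ _)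
        ((intervalIntegrable_Kf μ _ _).const_mul _),
      intervalIntegral.integral_const_mul, ← Af_sub μ x₂ x]
  set E : ℝ := ∫ t in x₂..x, (Af μ t * rho μ x₀ t - κ⁻¹) * Kf μ t with hE
  have hEbd : |E| ≤ ε * ellH μ x := by
    have hb : ∀ᵐ t ∂(volume.restrict (Set.uIoc x₂ x)),
        ‖(Af μ t * rho μ x₀ t - κ⁻¹) * Kf μ t‖ ≤ ε * Hf μ t := by
      filter_upwards [ae_restrict_mem measurableSet_uIoc] with t ht
      rw [Set.uIoc_of_le hx] at ht
      have ht2 : x₂ ≤ t := ht.1.le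
      have ht0 : (0:ℝ) ≤ t := le_trans hx₂pos.le ht2
      rw [Real.norm_eq_abs, abs_mul]
      exact mul_le_mul (hφbd t ht2) (abs_Kf_le μ ht0) (abs_nonneg _)
        (le_of_lt hε)
    have hnorm := intervalIntegral.norm_integral_le_abs_of_norm_le hb
      ((intervalIntegrable_Hf μ x₂ x).const_mul ε)
    have hval : ∫ t in x₂..x, ε * Hf μ t = ε * (ellH μ x - ellH μ x₂) := by
      rw [intervalIntegral.integral_const_mul, ← ellH_sub μ x₂ x]
    have hmon : ellH μ x₂ ≤ ellH μ x := ellH_mono μ hx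
    have hℓx₂ : 0 ≤ ellH μ x₂ := ellH_nonneg μ hx₂pos.le
    rw [hval] at hnorm
    have : |ε * (ellH μ x - ellH μ x₂)| = ε * (ellH μ x - ellH μ x₂) := by
      rw [abs_of_nonneg]; nlinarith
    rw [this] at hnorm
    calc |E| ≤ ε * (ellH μ x - ellH μ x₂) := by simpa [hE] using hnorm
      _ ≤ ε * ellH μ x := by nlinarith
  -- combine everything linearly
  have heq : ellH μ x - κ⁻¹ * Af μ x =
      C₁ + 2*E + (κ⁻¹ * Af μ x - Af μ x ^ 2 * rho μ x₀ x) := by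
    rw [hC₁]
    have h1 : x₁ = x₀ + 1 := hx₁def
    rw [e3, e4, e5] at hid
    linarith
  have hlast : |κ⁻¹ * Af μ x - Af μ x ^ 2 * rho μ x₀ x| ≤ ε * Af μ x := by
    have hrw : κ⁻¹ * Af μ x - Af μ x ^ 2 * rho μ x₀ x =
        Af μ x * -(Af μ x * rho μ x₀ x - κ⁻¹) := by ring
    rw [hrw, abs_mul, abs_neg, abs_of_pos hAx]
    calc Af μ x * |Af μ x * rho μ x₀ x - κ⁻¹| ≤ Af μ x * ε :=
          mul_le_mul_of_nonneg_left (hφbd x hx) hAx.le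
      _ = ε * Af μ x := mul_comm _ _
  calc |ellH μ x - κ⁻¹ * Af μ x|
      = |C₁ + 2*E + (κ⁻¹ * Af μ x - Af μ x ^ 2 * rho μ x₀ x)| := by rw [heq]
    _ ≤ |C₁ + 2*E| + |κ⁻¹ * Af μ x - Af μ x ^ 2 * rho μ x₀ x| := abs_add_le _ _
    _ ≤ (|C₁| + |2*E|) + (ε * Af μ x) := add_le_add (abs_add_le _ _) hlast
    _ ≤ 2*ε*ellH μ x + ε*Af μ x + |C₁| := by
        rw [abs_mul, abs_two]
        linarith
end Dir2
section Dir2b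
variable (μ : Measure ℝ) [IsProbabilityMeasure μ]

lemma dir2 (hmean : ∫⁻ x, ENNReal.ofReal |x| ∂μ = ⊤) {x₀ : ℝ} (hx₀ : 0 < x₀)
    (hA : ∀ x ≥ x₀, 0 < Af μ x)
    (hInt : IntegrableOn (fun x => Hf μ x / Af μ x ^ 2) (Set.Ioi x₀))
    {κ : ℝ} (hκ : 0 < κ)
    (hm : Tendsto (fun x => (rr μ x)⁻¹ / Af μ x) atTop (𝓝 κ)) :
    Tendsto (fun x => Af μ x / ellH μ x) atTop (𝓝 κ) := by
  have hℓtop : Tendsto (ellH μ) atTop atTop := ellH_tendsto_atTop μ hmean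
  -- convert hypothesis into φ := A·ρ → κ⁻¹
  have hm' : Tendsto (fun x => (Af μ x * rho μ x₀ x)⁻¹) atTop (𝓝 κ) := by
    apply hm.congr'
    filter_upwards [eventually_ge_atTop x₀] with x hx
    have hAx : 0 < Af μ x := hA x hx
    have hrx : 0 < rr μ x := rr_pos μ hInt hmean hA hx
    rw [rho_eq_rr μ hInt hx, mul_inv, div_eq_mul_inv, mul_comm]
  have hφ : Tendsto (fun x => Af μ x * rho μ x₀ x) atTop (𝓝 κ⁻¹) := by
    have h1 := hm'.inv₀ hκ.ne'
    apply h1.congr'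
    filter_upwards [eventually_ge_atTop x₀] with x hx
    rw [inv_inv]
  -- eventual bound  A ≤ 6 κ ℓ
  have hι : 0 < κ⁻¹ := inv_pos.mpr hκ
  have hB : ∀ᶠ x in atTop, Af μ x ≤ 6 * κ * ellH μ x := by
    have hε₀ : (0:ℝ) < min (1/4) (κ⁻¹/2) := by positivity
    obtain ⟨C, hC⟩ := master_estimate μ hmean hx₀ hA hκ hφ hε₀
    filter_upwards [hC, hℓtop.eventually (eventually_ge_atTop C),
      hℓtop.eventually (eventually_ge_atTop 0), eventually_ge_atTop x₀] with x h1 h2 h3 h4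
    have hAx : 0 < Af μ x := hA x h4
    have hε₁ : min (1/4) (κ⁻¹/2) ≤ 1/4 := min_le_left _ _
    have hε₂ : min (1/4) (κ⁻¹/2) ≤ κ⁻¹/2 := min_le_right _ _
    have key : κ⁻¹ * Af μ x - ellH μ x ≤
        2*(min (1/4) (κ⁻¹/2))*ellH μ x + (min (1/4) (κ⁻¹/2))*Af μ x + C :=
      by
      have hna := neg_abs_le (ellH μ x - κ⁻¹ * Af μ x)
      linarith
    have h5 : (κ⁻¹/2) * Af μ x ≤ (3/2) * ellH μ x + C := by nlinarith
    have h6 : (κ⁻¹/2) * Af μ x ≤ (5/2) * ellH μ x := by linarith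
    have hκκ : κ * κ⁻¹ = 1 := mul_inv_cancel₀ hκ.ne'
    nlinarith [mul_le_mul_of_nonneg_left h6 hκ.le]
  -- final ε-argument
  rw [Metric.tendsto_atTop]
  intro δ hδ
  have hεpos : (0:ℝ) < δ / (2*κ*(3+6*κ)) := by positivity
  obtain ⟨C, hC⟩ := master_estimate μ hmean hx₀ hA hκ hφ hεpos
  set ε := δ / (2*κ*(3+6*κ)) with hεdef
  have hev : ∀ᶠ x in atTop, dist (Af μ x / ellH μ x) κ < δ := by
    filter_upwards [hC, hB, hℓtop.eventually (eventually_ge_atTop (|C|/ε)),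
      hℓtop.eventually (eventually_gt_atTop 0), eventually_ge_atTop x₀] with x h1 h2 h3 h4 h5
    have hAx : 0 < Af μ x := hA x h5
    have hCle : |C| ≤ ε * ellH μ x := by
      rw [div_le_iff₀ hεpos] at h3
      linarith [mul_comm ε (ellH μ x)]
    have hCle' : C ≤ ε * ellH μ x := le_trans (le_abs_self C) hCle
    have hbd : |ellH μ x - κ⁻¹ * Af μ x| ≤ 2*ε*ellH μ x + ε*Af μ x + C := h1
    have hbd2 : |ellH μ x - κ⁻¹ * Af μ x| ≤ (3 + 6*κ) * ε * ellH μ x := by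
      calc |ellH μ x - κ⁻¹ * Af μ x| ≤ 2*ε*ellH μ x + ε*Af μ x + C := hbd
        _ ≤ 2*ε*ellH μ x + ε*(6*κ*ellH μ x) + ε * ellH μ x := by
            nlinarith [mul_le_mul_of_nonneg_left h2 hεpos.le]
        _ = (3 + 6*κ) * ε * ellH μ x := by ring
    rw [Real.dist_eq]
    have heq2 : Af μ x / ellH μ x - κ = κ * (κ⁻¹ * Af μ x - ellH μ x) / ellH μ x := by
      field_simp
    rw [heq2, abs_div, abs_of_pos h4, abs_mul, abs_of_pos hκ, abs_sub_comm]
    have hstep : κ * |ellH μ x - κ⁻¹ * Af μ x| ≤ κ * ((3 + 6*κ) * ε * ellH μ x) :=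
      mul_le_mul_of_nonneg_left hbd2 hκ.le
    calc κ * |ellH μ x - κ⁻¹ * Af μ x| / ellH μ x
        ≤ κ * ((3 + 6*κ) * ε * ellH μ x) / ellH μ x :=
          div_le_div_of_nonneg_right hstep h4.le |>.trans_eq rfl
      _ = κ * (3 + 6*κ) * ε := by field_simp
      _ = δ/2 := by rw [hεdef]; field_simp
      _ < δ := by linarith
  exact hev.exists_forall_of_atTop

end Dir2b

/-- Under (Ha) and (Hb), with `κ > 0`: `A/ℓ → κ` implies `m/A → κ`,
and conversely `m/A → κ` implies `A/ℓ → κ`. -/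
theorem stmt11 (μ : Measure ℝ) [IsProbabilityMeasure μ]
    (hmean : ∫⁻ x, ENNReal.ofReal |x| ∂μ = ⊤)
    (hHa : HaCond μ) (hHb : HbCond μ) (κ : ℝ) (hκ : 0 < κ) :
    (Tendsto (fun x => Af μ x / ellH μ x) atTop (𝓝 κ) →
      Tendsto (fun x => mF μ x / Af μ x) atTop (𝓝 κ)) ∧
    (Tendsto (fun x => mF μ x / Af μ x) atTop (𝓝 κ) →
      Tendsto (fun x => Af μ x / ellH μ x) atTop (𝓝 κ)) := by
  obtain ⟨x₀, hx₀, hA, hInt⟩ := hHb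
  constructor
  · intro h
    exact dir1 μ hmean hx₀ hA hInt hκ h
  · intro h
    exact dir2 μ hmean hx₀ hA hInt hκ h
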